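/- Let G be a finite subgroup of SO(2n+1) with n ≥ 2 such that every nontrivial element of G has exactly one eigenvalue equal to 1. Then there exists a nonzero vector v in ℝ^(2n+1) such that g(v) = v for all g in G. -/

import Mathlib

set_option maxHeartbeats 1000000
set_option synthInstance.maxHeartbeats 400000

/-- The dimension of the eigenspace of eigenvalue 1 of (the linear map given by) a matrix. -/
noncomputable def fixedSpaceDim {m : ℕ} (g : Matrix (Fin m) (Fin m) ℝ) : ℕ :=
  Module.finrank ℝ ↥(Module.End.eigenspace (Matrix.toLin' g) 1)


namespace CFVaux

variable {m : ℕ}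

lemma mem_fix_iff (g : Matrix (Fin m) (Fin m) ℝ) (x : Fin m → ℝ) :
    x ∈ Module.End.eigenspace (Matrix.toLin' g) 1 ↔ g.mulVec x = x := by
  rw [Module.End.mem_eigenspace_iff, Matrix.toLin'_apply, one_smul]

lemma dot_self_nonneg (u : Fin m → ℝ) : 0 ≤ dotProduct u u := by
  unfold dotProduct
  exact Finset.sum_nonneg fun i _ => mul_self_nonneg _

/-- If the fixed space is 1-dimensional, the unit fixed vectors form a pair `{a, -a}`. -/
lemma pair_lemma (g : Matrix (Fin m) (Fin m) ℝ) (h1 : fixedSpaceDim g = 1) :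
    ∃ a : Fin m → ℝ, a ≠ -a ∧
      ∀ x : Fin m → ℝ, (dotProduct x x = 1 ∧ g.mulVec x = x) ↔ (x = a ∨ x = -a) := by
  classical
  have h1' : Module.finrank ℝ ↥(Module.End.eigenspace (Matrix.toLin' g) 1) = 1 := h1
  obtain ⟨v, hv0, hv⟩ := (finrank_eq_one_iff' (K := ℝ)).mp h1'
  set u : Fin m → ℝ := (v : Fin m → ℝ) with hu
  have hu0 : u ≠ 0 := fun h => hv0 (Subtype.ext h)
  have hufix : g.mulVec u = u := (mem_fix_iff g u).mp v.2
  have hupos : 0 < dotProduct u u := by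
    rcases lt_or_eq_of_le (dot_self_nonneg u) with h | h
    · exact h
    · exact absurd (dotProduct_self_eq_zero.mp h.symm) hu0
  set t : ℝ := dotProduct u u with htdef
  set r : ℝ := (Real.sqrt t)⁻¹ with hrdef
  have hsq : Real.sqrt t * Real.sqrt t = t := Real.mul_self_sqrt hupos.le
  have hsqpos : 0 < Real.sqrt t := Real.sqrt_pos.mpr hupos
  have hr0 : r ≠ 0 := inv_ne_zero hsqpos.ne'
  have hr2 : r * r * t = 1 := by
    rw [hrdef, ← hsq]; field_simp; rw [Real.sqrt_sq hsqpos.le]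
  have ha0 : r • u ≠ 0 := smul_ne_zero hr0 hu0
  have hane : r • u ≠ -(r • u) := by
    intro h
    have h2 : (2:ℝ) • (r • u) = 0 := by
      rw [two_smul]; nth_rewrite 1 [h]; exact neg_add_cancel _
    exact ha0 (by simpa using (smul_eq_zero.mp h2).resolve_left (by norm_num))
  have hadot : dotProduct (r • u) (r • u) = 1 := by
    rw [smul_dotProduct, dotProduct_smul, smul_eq_mul, smul_eq_mul, ← mul_assoc, ← htdef]
    exact hr2
  have hafix : g.mulVec (r • u) = r • u := by
    rw [Matrix.mulVec_smul, hufix]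
  refine ⟨r • u, hane, fun x => ⟨?_, ?_⟩⟩
  · rintro ⟨hx1, hx2⟩
    have hxP : x ∈ Module.End.eigenspace (Matrix.toLin' g) 1 := (mem_fix_iff g x).mpr hx2
    obtain ⟨c, hc⟩ := hv ⟨x, hxP⟩
    have hcu : c • u = x := congrArg Subtype.val hc
    have hc2 : c * c * t = 1 := by
      rw [← hx1, ← hcu, smul_dotProduct, dotProduct_smul, smul_eq_mul, smul_eq_mul,
        ← mul_assoc, ← htdef]
    have hfac : (c - r) * (c + r) = 0 := by
      have h2 : (c * c - r * r) * t = 0 := by rw [sub_mul, hc2, hr2, sub_self]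
      have h3 : c * c - r * r = 0 := by
        rcases mul_eq_zero.mp h2 with h | h
        · exact h
        · exact absurd h hupos.ne'
      nlinarith [h3]
    rcases mul_eq_zero.mp hfac with h | h
    · left; rw [← hcu, show c = r by linarith]
    · right; rw [← hcu, show c = -r by linarith, neg_smul]
  · rintro (rfl | rfl)
    · exact ⟨hadot, hafix⟩
    · constructor
      · rw [neg_dotProduct, dotProduct_neg, neg_neg]; exact hadot
      · rw [Matrix.mulVec_neg, hafix]
end CFVaux

namespace CFVaux2
open CFVaux

lemma negker_finrank {m : ℕ} (s : Matrix (Fin m) (Fin m) ℝ) (hs : s * s = 1)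
    (h1 : fixedSpaceDim s = 1) :
    Module.finrank ℝ ↥(LinearMap.ker (Matrix.toLin' s + (LinearMap.id : (Fin m → ℝ) →ₗ[ℝ] (Fin m → ℝ)))) + 1 = m := by
  classical
  set Kp := Module.End.eigenspace (Matrix.toLin' s) 1 with hKp
  set Km := LinearMap.ker (Matrix.toLin' s + (LinearMap.id : (Fin m → ℝ) →ₗ[ℝ] (Fin m → ℝ))) with hKm
  have hSS : ∀ x : Fin m → ℝ, s.mulVec (s.mulVec x) = x := by
    intro x; rw [Matrix.mulVec_mulVec, hs, Matrix.one_mulVec]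
  have memKm : ∀ y : Fin m → ℝ, y ∈ Km ↔ s.mulVec y + y = 0 := by
    intro y
    rw [hKm, LinearMap.mem_ker, LinearMap.add_apply, LinearMap.id_apply, Matrix.toLin'_apply]
  have hsup : Kp ⊔ Km = ⊤ := by
    rw [Submodule.eq_top_iff']
    intro x
    refine Submodule.mem_sup.mpr ⟨(1/2 : ℝ) • (x + s.mulVec x), ?_, (1/2 : ℝ) • (x - s.mulVec x), ?_, ?_⟩
    · rw [hKp, mem_fix_iff, Matrix.mulVec_smul]
      congr 1
      rw [Matrix.mulVec_add, hSS, add_comm]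
    · rw [memKm, Matrix.mulVec_smul, Matrix.mulVec_sub, hSS]
      module
    · module
  have hinf : Kp ⊓ Km = ⊥ := by
    rw [Submodule.eq_bot_iff]
    intro x hx
    rw [Submodule.mem_inf] at hx
    obtain ⟨h1x, h2x⟩ := hx
    rw [hKp, mem_fix_iff] at h1x
    rw [memKm, h1x] at h2x
    have h3 : (2:ℝ) • x = 0 := by rw [two_smul]; exact h2x
    simpa using (smul_eq_zero.mp h3).resolve_left (by norm_num)
  have := Submodule.finrank_sup_add_finrank_inf_eq Kp Km
  rw [hsup, hinf, finrank_top, finrank_bot, Module.finrank_fin_fun, add_zero] at this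
  have h1' : Module.finrank ℝ ↥Kp = 1 := h1
  rw [h1'] at this
  omega

lemma invol_core {n : ℕ} (s t : Matrix (Fin (2*n+1)) (Fin (2*n+1)) ℝ)
    (hs : s * s = 1) (ht : t * t = 1)
    (hs1 : fixedSpaceDim s = 1) (ht1 : fixedSpaceDim t = 1) :
    2 * n ≤ fixedSpaceDim (s * t) + 1 := by
  classical
  set A := LinearMap.ker (Matrix.toLin' s + (LinearMap.id : (Fin (2*n+1) → ℝ) →ₗ[ℝ] _)) with hA
  set B := LinearMap.ker (Matrix.toLin' t + (LinearMap.id : (Fin (2*n+1) → ℝ) →ₗ[ℝ] _)) with hB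
  have hdA : Module.finrank ℝ ↥A + 1 = 2*n+1 := negker_finrank s hs hs1
  have hdB : Module.finrank ℝ ↥B + 1 = 2*n+1 := negker_finrank t ht ht1
  have hle : A ⊓ B ≤ Module.End.eigenspace (Matrix.toLin' (s * t)) 1 := by
    intro x hx
    rw [Submodule.mem_inf] at hx
    obtain ⟨hxA, hxB⟩ := hx
    rw [hA, LinearMap.mem_ker, LinearMap.add_apply, LinearMap.id_apply, Matrix.toLin'_apply] at hxA
    rw [hB, LinearMap.mem_ker, LinearMap.add_apply, LinearMap.id_apply, Matrix.toLin'_apply] at hxB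
    rw [mem_fix_iff, ← Matrix.mulVec_mulVec]
    have hxB' : t.mulVec x = -x := by linear_combination (norm := module) hxB
    have hxA' : s.mulVec x = -x := by linear_combination (norm := module) hxA
    rw [hxB', Matrix.mulVec_neg, hxA', neg_neg]
  have hmono : Module.finrank ℝ ↥(A ⊓ B) ≤ fixedSpaceDim (s * t) :=
    Submodule.finrank_mono hle
  have hsum := Submodule.finrank_sup_add_finrank_inf_eq A B
  have hsle : Module.finrank ℝ ↥(A ⊔ B) ≤ 2*n+1 := by
    have := Submodule.finrank_le (A ⊔ B)
    rwa [Module.finrank_fin_fun] at this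
  omega

end CFVaux2

section Action
open CFVaux CFVaux2

variable {n : ℕ} (G : Subgroup (Matrix.orthogonalGroup (Fin (2*n+1)) ℝ))

/-- The underlying matrix of an element of `G`, as a monoid hom. -/
def mat : ↥G →* Matrix (Fin (2*n+1)) (Fin (2*n+1)) ℝ :=
  ((unitary (Matrix (Fin (2*n+1)) (Fin (2*n+1)) ℝ)).subtype).comp G.subtype

lemma mat_orth (g : ↥G) : (mat G g).transpose * mat G g = 1 := g.1.2.1

lemma dot_pres (g : ↥G) (x y : Fin (2*n+1) → ℝ) :
    dotProduct ((mat G g).mulVec x) ((mat G g).mulVec y) = dotProduct x y := by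
  rw [Matrix.dotProduct_mulVec, Matrix.vecMul_mulVec, mat_orth, Matrix.vecMul_one]

/-- The set of unit vectors fixed by some nontrivial element of `G`. -/
def sphX : Set (Fin (2*n+1) → ℝ) :=
  {x | dotProduct x x = 1 ∧ ∃ g : ↥G, g ≠ 1 ∧ (mat G g).mulVec x = x}

instance actSphX : MulAction ↥G ↥(sphX G) where
  smul g x := ⟨(mat G g).mulVec x.1, by
    constructor
    · rw [dot_pres]; exact x.2.1
    · obtain ⟨k, hk1, hkfix⟩ := x.2.2
      refine ⟨g * k * g⁻¹, ?_, ?_⟩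
      · intro h
        apply hk1
        have : k = g⁻¹ * (g * k * g⁻¹) * g := by group
        rw [this, h]; group
      · rw [Matrix.mulVec_mulVec, ← map_mul, show g * k * g⁻¹ * g = g * k by group, map_mul,
          ← Matrix.mulVec_mulVec, hkfix]⟩
  one_smul x := by
    apply Subtype.ext
    show (mat G 1).mulVec x.1 = x.1
    rw [map_one, Matrix.one_mulVec]
  mul_smul g h x := by
    apply Subtype.ext
    show (mat G (g * h)).mulVec x.1 = (mat G g).mulVec ((mat G h).mulVec x.1)
    rw [map_mul, Matrix.mulVec_mulVec]

lemma smul_val (g : ↥G) (x : ↥(sphX G)) : ((g • x : ↥(sphX G)) : Fin (2*n+1) → ℝ) = (mat G g).mulVec x.1 := rfl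

end Action


/-- Let `G` be a finite subgroup of `SO(2n+1)`, `n ≥ 2`, such that every nontrivial element of
`G` has exactly one eigenvalue equal to `1` (one-dimensional fixed space). Then there is a
nonzero vector `v ∈ ℝ^(2n+1)` fixed by every element of `G`. -/
theorem common_fixed_vector_of_SO_odd
    (n : ℕ) (hn : 2 ≤ n)
    (G : Subgroup (Matrix.orthogonalGroup (Fin (2*n+1)) ℝ)) (hG : Finite G)
    (hdet : ∀ g ∈ G, ((g : Matrix (Fin (2*n+1)) (Fin (2*n+1)) ℝ)).det = 1)
    (heig : ∀ g ∈ G, g ≠ 1 →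
      fixedSpaceDim (g : Matrix (Fin (2*n+1)) (Fin (2*n+1)) ℝ) = 1) :
    ∃ v : Fin (2*n+1) → ℝ, v ≠ 0 ∧
      ∀ g ∈ G, Matrix.mulVec (g : Matrix (Fin (2*n+1)) (Fin (2*n+1)) ℝ) v = v := by
  classical
  by_contra hcon
  push_neg at hcon
  haveI : Fintype ↥G := Fintype.ofFinite _
  -- extraction of a nontrivial "mover" for every nonzero vector
  have hone : ∀ v : Fin (2*n+1) → ℝ, v ≠ 0 → ∃ g : ↥G, g ≠ 1 ∧ (mat G g).mulVec v ≠ v := by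
    intro v hv
    obtain ⟨g, hgG, hgv⟩ := hcon v hv
    have hg1 : (⟨g, hgG⟩ : ↥G) ≠ 1 := by
      intro h
      apply hgv
      have h2 : g = 1 := congrArg Subtype.val h
      rw [h2]
      show Matrix.mulVec ((1 : Matrix.orthogonalGroup (Fin (2*n+1)) ℝ) : Matrix (Fin (2*n+1)) (Fin (2*n+1)) ℝ) v = v
      have h3 : ((1 : Matrix.orthogonalGroup (Fin (2*n+1)) ℝ) : Matrix (Fin (2*n+1)) (Fin (2*n+1)) ℝ) = 1 := rfl
      rw [h3]
      exact Matrix.one_mulVec v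
    exact ⟨⟨g, hgG⟩, hg1, hgv⟩
  have hex : ∃ g : ↥G, g ≠ 1 := by
    obtain ⟨g, hg1, _⟩ := hone (fun _ => 1) (by
      intro h
      have := congrFun h ⟨0, by omega⟩
      norm_num at this)
    exact ⟨g, hg1⟩
  obtain ⟨g₀, hg₀⟩ := hex
  haveI : Nontrivial ↥G := ⟨⟨g₀, 1, hg₀⟩⟩
  have heig' : ∀ g : ↥G, g ≠ 1 → fixedSpaceDim (mat G g) = 1 := by
    intro g hg
    have hg1 : (g : Matrix.orthogonalGroup (Fin (2*n+1)) ℝ) ≠ 1 := fun h => hg (Subtype.ext h)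
    exact heig g.1 g.2 hg1
  -- uniqueness of involutions
  have huniq : ∀ s t : ↥G, s ≠ 1 → t ≠ 1 → s * s = 1 → t * t = 1 → s = t := by
    intro s t hs ht hss htt
    by_contra hst
    have hst1 : s * t ≠ 1 := by
      intro h
      have h1 : s⁻¹ = s := inv_eq_of_mul_eq_one_right hss
      have h2 : s⁻¹ = t := inv_eq_of_mul_eq_one_right h
      exact hst (h1.symm.trans h2)
    have hms : mat G s * mat G s = 1 := by rw [← map_mul, hss, map_one]
    have hmt : mat G t * mat G t = 1 := by rw [← map_mul, htt, map_one]
    have h3 := CFVaux2.invol_core (mat G s) (mat G t) hms hmt (heig' s hs) (heig' t ht)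
    rw [← map_mul, heig' (s*t) hst1] at h3
    omega
  -- finiteness of the fixed sphere-point set
  have hXfin : (sphX G).Finite := by
    refine Set.Finite.subset (s := ⋃ (g : ↥G) (_ : g ≠ 1),
        {x : Fin (2*n+1) → ℝ | dotProduct x x = 1 ∧ (mat G g).mulVec x = x}) ?_ ?_
    · apply Set.finite_iUnion
      intro g
      apply Set.finite_iUnion
      intro hg
      obtain ⟨a, hane, hiff⟩ := CFVaux.pair_lemma (mat G g) (heig' g hg)
      have hset : {x : Fin (2*n+1) → ℝ | dotProduct x x = 1 ∧ (mat G g).mulVec x = x}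
          = {a, -a} := by
        ext x
        simpa using hiff x
      rw [hset]
      exact (Set.finite_singleton _).insert _
    · rintro x ⟨hx1, g, hg1, hg2⟩
      exact Set.mem_iUnion.mpr ⟨g, Set.mem_iUnion.mpr ⟨hg1, ⟨hx1, hg2⟩⟩⟩
  haveI : Finite ↥(sphX G) := hXfin.to_subtype
  haveI : Fintype ↥(sphX G) := Fintype.ofFinite _
  haveI instOrbF : ∀ x : ↥(sphX G), Fintype ↥(MulAction.orbit ↥G x) := fun _ => Fintype.ofFinite _
  haveI instStabF : ∀ x : ↥(sphX G), Fintype ↥(MulAction.stabilizer ↥G x) := fun _ => Fintype.ofFinite _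
  haveI instFixF : ∀ g : ↥G, Fintype ↥(MulAction.fixedBy ↥(sphX G) g) := fun _ => Fintype.ofFinite _
  haveI : Fintype (Quotient (MulAction.orbitRel ↥G ↥(sphX G))) := Fintype.ofFinite _
  -- stabilizers are nontrivial
  have hstabex : ∀ x : ↥(sphX G), ∃ g : ↥G, g ≠ 1 ∧ g ∈ MulAction.stabilizer ↥G x := by
    intro x
    obtain ⟨g, hg1, hgfix⟩ := x.2.2
    exact ⟨g, hg1, MulAction.mem_stabilizer_iff.mpr (Subtype.ext hgfix)⟩
  have hstab2 : ∀ x : ↥(sphX G), 2 ≤ Fintype.card ↥(MulAction.stabilizer ↥G x) := by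
    intro x
    obtain ⟨g, hg1, hg⟩ := hstabex x
    haveI : Nontrivial ↥(MulAction.stabilizer ↥G x) :=
      ⟨⟨⟨g, hg⟩, 1, fun h => hg1 (congrArg Subtype.val h)⟩⟩
    exact Fintype.one_lt_card_iff_nontrivial.mpr this
  -- no orbit is a singleton
  have horb2 : ∀ x : ↥(sphX G), 2 ≤ Fintype.card ↥(MulAction.orbit ↥G x) := by
    intro x
    by_contra h
    push_neg at h
    have hpos : 0 < Fintype.card ↥(MulAction.orbit ↥G x) :=
      Fintype.card_pos_iff.mpr ⟨⟨x, MulAction.mem_orbit_self x⟩⟩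
    haveI hsing : Subsingleton ↥(MulAction.orbit ↥G x) :=
      Fintype.card_le_one_iff_subsingleton.mp (by omega)
    have hfix : ∀ g : ↥G, g • x = x := by
      intro g
      have h2 : (⟨g • x, MulAction.mem_orbit x g⟩ : ↥(MulAction.orbit ↥G x))
          = ⟨x, MulAction.mem_orbit_self x⟩ := Subsingleton.elim _ _
      exact congrArg Subtype.val h2
    have hx0 : (x : Fin (2*n+1) → ℝ) ≠ 0 := by
      intro h0
      have hd := x.2.1
      rw [h0] at hd
      simp [zero_dotProduct] at hd
    obtain ⟨g, hg1, hgfix⟩ := hone x.1 hx0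
    exact hgfix (congrArg Subtype.val (hfix g))
  -- orbit-stabilizer
  have horbstab : ∀ x : ↥(sphX G),
      Fintype.card ↥(MulAction.orbit ↥G x) * Fintype.card ↥(MulAction.stabilizer ↥G x)
        = Fintype.card ↥G :=
    fun x => MulAction.card_orbit_mul_card_stabilizer_eq_card_group ↥G x
  -- Burnside
  have hburn := MulAction.sum_card_fixedBy_eq_card_orbits_mul_card_group ↥G ↥(sphX G)
  -- fixed point counts
  have hfix1 : Fintype.card ↥(MulAction.fixedBy ↥(sphX G) (1 : ↥G)) = Fintype.card ↥(sphX G) := by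
    have huniv : MulAction.fixedBy ↥(sphX G) (1 : ↥G) = Set.univ := by
      ext x
      simp [MulAction.mem_fixedBy]
    rw [← Nat.card_eq_fintype_card, ← Nat.card_eq_fintype_card]
    exact Nat.card_congr ((Equiv.setCongr huniv).trans (Equiv.Set.univ _))
  have hfix2 : ∀ g : ↥G, g ≠ 1 → Fintype.card ↥(MulAction.fixedBy ↥(sphX G) g) = 2 := by
    intro g hg
    obtain ⟨a, hane, hiff⟩ := CFVaux.pair_lemma (mat G g) (heig' g hg)
    have haprop := (hiff a).mpr (Or.inl rfl)
    have hnaprop := (hiff (-a)).mpr (Or.inr rfl)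
    have haX : a ∈ sphX G := ⟨haprop.1, g, hg, haprop.2⟩
    have hnaX : -a ∈ sphX G := ⟨hnaprop.1, g, hg, hnaprop.2⟩
    have hpair : MulAction.fixedBy ↥(sphX G) g
        = {(⟨a, haX⟩ : ↥(sphX G)), (⟨-a, hnaX⟩ : ↥(sphX G))} := by
      ext x
      simp only [MulAction.mem_fixedBy, Set.mem_insert_iff, Set.mem_singleton_iff]
      constructor
      · intro hx
        have hval : (mat G g).mulVec x.1 = x.1 := congrArg Subtype.val hx
        rcases (hiff x.1).mp ⟨x.2.1, hval⟩ with h | h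
        · exact Or.inl (Subtype.ext h)
        · exact Or.inr (Subtype.ext h)
      · rintro (rfl | rfl)
        · exact Subtype.ext haprop.2
        · exact Subtype.ext hnaprop.2
    rw [← Nat.card_eq_fintype_card, Nat.card_coe_set_eq, hpair]
    exact Set.ncard_pair (fun h => hane (congrArg Subtype.val h))
  -- abbreviations
  set N := Fintype.card ↥G with hNdef
  set F := Fintype.card ↥(sphX G) with hFdef
  set k := Fintype.card (Quotient (MulAction.orbitRel ↥G ↥(sphX G))) with hkdef
  have hN2 : 2 ≤ N := Fintype.one_lt_card_iff_nontrivial.mpr ‹Nontrivial ↥G›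
  have hsum : (∑ g : ↥G, Fintype.card ↥(MulAction.fixedBy ↥(sphX G) g)) = 2*(N - 1) + F := by
    rw [← Finset.sum_erase_add _ _ (Finset.mem_univ (1 : ↥G)), hfix1]
    congr 1
    rw [Finset.sum_congr rfl (fun g hg => hfix2 g (Finset.ne_of_mem_erase hg)), Finset.sum_const,
      Finset.card_erase_of_mem (Finset.mem_univ _), Finset.card_univ, smul_eq_mul, ← hNdef]
    omega
  have hB : 2*(N-1) + F = k * N := by rw [← hsum]; exact hburn
  have hXsum : F = ∑ ω : Quotient (MulAction.orbitRel ↥G ↥(sphX G)),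
      Fintype.card ↥(MulAction.orbit ↥G ω.out) := by
    rw [hFdef, Fintype.card_congr (MulAction.selfEquivSigmaOrbits ↥G ↥(sphX G))]
    exact Fintype.card_sigma
  have hdleN : ∀ x : ↥(sphX G), 2 * Fintype.card ↥(MulAction.orbit ↥G x) ≤ N := by
    intro x
    calc 2 * Fintype.card ↥(MulAction.orbit ↥G x)
        = Fintype.card ↥(MulAction.orbit ↥G x) * 2 := mul_comm _ _
      _ ≤ Fintype.card ↥(MulAction.orbit ↥G x) * Fintype.card ↥(MulAction.stabilizer ↥G x) :=
          Nat.mul_le_mul_left _ (hstab2 x)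
      _ = N := horbstab x
  have h2F : 2 * F ≤ k * N := by
    rw [hXsum, Finset.mul_sum]
    calc (∑ ω : Quotient (MulAction.orbitRel ↥G ↥(sphX G)),
          2 * Fintype.card ↥(MulAction.orbit ↥G ω.out))
        ≤ ∑ _ω : Quotient (MulAction.orbitRel ↥G ↥(sphX G)), N :=
          Finset.sum_le_sum (fun ω _ => hdleN ω.out)
      _ = k * N := by rw [Finset.sum_const, Finset.card_univ, smul_eq_mul, ← hkdef]
  have h2k : 2 * k ≤ F := by
    rw [hXsum]
    calc 2 * k = ∑ _ω : Quotient (MulAction.orbitRel ↥G ↥(sphX G)), 2 := by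
          rw [Finset.sum_const, Finset.card_univ, smul_eq_mul, ← hkdef, mul_comm]
      _ ≤ _ := Finset.sum_le_sum (fun ω _ => horb2 ω.out)
  have hk1 : 1 ≤ k := by
    have hne : Nonempty ↥(sphX G) := by
      obtain ⟨a, hane, hiff⟩ := CFVaux.pair_lemma (mat G g₀) (heig' g₀ hg₀)
      have haprop := (hiff a).mpr (Or.inl rfl)
      exact ⟨⟨a, haprop.1, g₀, hg₀, haprop.2⟩⟩
    obtain ⟨x⟩ := hne
    rw [hkdef]
    exact Fintype.card_pos_iff.mpr ⟨Quotient.mk _ x⟩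
  have hk4 : k < 4 := by
    by_contra hk'
    push_neg at hk'
    have h4N : 4 * N ≤ k * N := Nat.mul_le_mul_right N hk'
    set M := k * N with hM
    omega
  have hkcase : k = 1 ∨ k = 2 ∨ k = 3 := by omega
  rcases hkcase with hk | hk | hk
  · rw [hk, one_mul] at hB
    rw [hk] at h2k
    omega
  · rw [hk] at hB h2k
    omega
  · rw [hk] at hB h2F
    have hFN : F = N + 2 := by omega
    have hN4' : 4 ≤ N := by omega
    have hex2 : ∃ x : ↥(sphX G), Fintype.card ↥(MulAction.stabilizer ↥G x) = 2 := by
      by_contra hno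
      push_neg at hno
      have h3d : ∀ x : ↥(sphX G), 3 * Fintype.card ↥(MulAction.orbit ↥G x) ≤ N := by
        intro x
        have h3 : 3 ≤ Fintype.card ↥(MulAction.stabilizer ↥G x) := by
          have h2 := hstab2 x
          have hne := hno x
          omega
        calc 3 * Fintype.card ↥(MulAction.orbit ↥G x)
            = Fintype.card ↥(MulAction.orbit ↥G x) * 3 := mul_comm _ _
          _ ≤ Fintype.card ↥(MulAction.orbit ↥G x) * Fintype.card ↥(MulAction.stabilizer ↥G x) :=
              Nat.mul_le_mul_left _ h3
          _ = N := horbstab x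
      have h3F : 3 * F ≤ 3 * N := by
        rw [hXsum, Finset.mul_sum]
        calc (∑ ω : Quotient (MulAction.orbitRel ↥G ↥(sphX G)),
              3 * Fintype.card ↥(MulAction.orbit ↥G ω.out))
            ≤ ∑ _ω : Quotient (MulAction.orbitRel ↥G ↥(sphX G)), N :=
              Finset.sum_le_sum (fun ω _ => h3d ω.out)
          _ = 3 * N := by rw [Finset.sum_const, Finset.card_univ, smul_eq_mul, ← hkdef, hk]
      omega
    obtain ⟨x₀, hx₀⟩ := hex2
    have hinvol : ∀ x : ↥(sphX G), Fintype.card ↥(MulAction.stabilizer ↥G x) = 2 →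
        ∃ t : ↥G, t ≠ 1 ∧ t * t = 1 ∧ t • x = x := by
      intro x h2
      haveI : Nontrivial ↥(MulAction.stabilizer ↥G x) :=
        Fintype.one_lt_card_iff_nontrivial.mp (by omega)
      obtain ⟨t, ht1⟩ := exists_ne (1 : ↥(MulAction.stabilizer ↥G x))
      have hdvd : orderOf t ∣ 2 := by
        have hh := orderOf_dvd_card (x := t)
        rwa [h2] at hh
      have ho2 : orderOf t = 2 :=
        (Nat.Prime.eq_one_or_self_of_dvd Nat.prime_two _ hdvd).resolve_left
          (fun h => ht1 (orderOf_eq_one_iff.mp h))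
      have ht2 : t * t = 1 := by
        have hp := pow_orderOf_eq_one t
        rw [ho2, pow_two] at hp
        exact hp
      exact ⟨t.1, fun h => ht1 (Subtype.ext h), congrArg Subtype.val ht2,
        MulAction.mem_stabilizer_iff.mp t.2⟩
    obtain ⟨s, hs1, hss, hsx₀⟩ := hinvol x₀ hx₀
    obtain ⟨a, hane, hiff⟩ := CFVaux.pair_lemma (mat G s) (heig' s hs1)
    have haprop := (hiff a).mpr (Or.inl rfl)
    have hnaprop := (hiff (-a)).mpr (Or.inr rfl)
    have haX : a ∈ sphX G := ⟨haprop.1, s, hs1, haprop.2⟩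
    have hnaX : -a ∈ sphX G := ⟨hnaprop.1, s, hs1, hnaprop.2⟩
    have hmem : ∀ x : ↥(sphX G), s • x = x →
        (x = (⟨a, haX⟩ : ↥(sphX G)) ∨ x = (⟨-a, hnaX⟩ : ↥(sphX G))) := by
      intro x hx
      have hval : (mat G s).mulVec x.1 = x.1 := congrArg Subtype.val hx
      rcases (hiff x.1).mp ⟨x.2.1, hval⟩ with h | h
      · exact Or.inl (Subtype.ext h)
      · exact Or.inr (Subtype.ext h)
    have hfixs : ∀ x : ↥(sphX G), Fintype.card ↥(MulAction.stabilizer ↥G x) = 2 → s • x = x := by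
      intro x h2
      obtain ⟨t, ht1, htt, htx⟩ := hinvol x h2
      rw [huniq s t hs1 ht1 hss htt]
      exact htx
    have horbsub : MulAction.orbit ↥G x₀ ⊆
        {(⟨a, haX⟩ : ↥(sphX G)), (⟨-a, hnaX⟩ : ↥(sphX G))} := by
      intro y hy
      have horbeq : MulAction.orbit ↥G y = MulAction.orbit ↥G x₀ :=
        MulAction.orbit_eq_iff.mpr hy
      have hcardeq : Fintype.card ↥(MulAction.orbit ↥G y)
          = Fintype.card ↥(MulAction.orbit ↥G x₀) := by
        rw [← Nat.card_eq_fintype_card, ← Nat.card_eq_fintype_card]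
        exact Nat.card_congr (Equiv.setCongr horbeq)
      have h2y : Fintype.card ↥(MulAction.stabilizer ↥G y) = 2 := by
        have h1 := horbstab y
        have h2 := horbstab x₀
        rw [hcardeq] at h1
        rw [hx₀] at h2
        have hd2 := horb2 x₀
        exact Nat.eq_of_mul_eq_mul_left (by omega) (h1.trans h2.symm)
      rcases hmem y (hfixs y h2y) with h | h
      · rw [h]; exact Set.mem_insert _ _
      · rw [h]; exact Set.mem_insert_of_mem _ rfl
    have horbcard : Fintype.card ↥(MulAction.orbit ↥G x₀) ≤ 2 := by
      rw [← Nat.card_eq_fintype_card, Nat.card_coe_set_eq]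
      refine le_trans (Set.ncard_le_ncard horbsub (Set.toFinite _)) ?_
      exact le_trans (Set.ncard_insert_le _ _) (by rw [Set.ncard_singleton])
    have hN4 : N = 4 := by
      have h1 := horbstab x₀
      rw [hx₀] at h1
      have hd2 := horb2 x₀
      omega
    have hallpair : ∀ x : ↥(sphX G),
        x = (⟨a, haX⟩ : ↥(sphX G)) ∨ x = (⟨-a, hnaX⟩ : ↥(sphX G)) := by
      intro x
      have h1 := horbstab x
      have hd2 := horb2 x
      have ha2 := hstab2 x
      rw [hN4] at h1
      have hdle : Fintype.card ↥(MulAction.orbit ↥G x) * 2 ≤ 4 :=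
        le_trans (Nat.mul_le_mul_left _ ha2) (le_of_eq h1)
      have hd : Fintype.card ↥(MulAction.orbit ↥G x) = 2 := by omega
      have ha : Fintype.card ↥(MulAction.stabilizer ↥G x) = 2 := by
        rw [hd] at h1; omega
      exact hmem x (hfixs x ha)
    have hFle : F ≤ 2 := by
      have hsubu : (Finset.univ : Finset ↥(sphX G)) ⊆
          {(⟨a, haX⟩ : ↥(sphX G)), (⟨-a, hnaX⟩ : ↥(sphX G))} := by
        intro x _
        rcases hallpair x with h | h <;> simp [h]
      calc F = (Finset.univ : Finset ↥(sphX G)).card := by rw [hFdef, Finset.card_univ]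
        _ ≤ ({(⟨a, haX⟩ : ↥(sphX G)), (⟨-a, hnaX⟩ : ↥(sphX G))} : Finset ↥(sphX G)).card :=
            Finset.card_le_card hsubu
        _ ≤ 2 := le_trans (Finset.card_insert_le _ _) (by simp)
    omega
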